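/- Let N ∈ ℕ and let a : ℝⁿ → ℂ be bounded with compact support and ∫ xᵅ a(x) dx = 0 for all |α| ≤ N. Then |â(ξ)| ≤ C(a) min(1, |ξ|^{N+1}) for all ξ ∈ ℝⁿ, where C(a) depends only on a, its support, and N. -/

import Mathlib

open MeasureTheory Real Filter Topology

noncomputable section

open Finset RealInnerProductSpace

lemma coord_le_norm {n : ℕ} (x : EuclideanSpace ℝ (Fin n)) (i : Fin n) : |x i| ≤ ‖x‖ := by
  have h := abs_real_inner_le_norm (EuclideanSpace.single i (1:ℝ)) x
  simpa [EuclideanSpace.inner_single_left, EuclideanSpace.norm_single] using h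

lemma integrable_aux {n : ℕ} {f : EuclideanSpace ℝ (Fin n) → ℂ} (hf : Measurable f) {R M : ℝ}
    (hsupp : ∀ x, x ∉ Metric.closedBall 0 R → f x = 0)
    (hbdd : ∀ x ∈ Metric.closedBall (0 : EuclideanSpace ℝ (Fin n)) R, ‖f x‖ ≤ M) :
    Integrable f := by
  have hg : Integrable ((Metric.closedBall (0 : EuclideanSpace ℝ (Fin n)) R).indicator
      (fun _ => M)) := by
    rw [integrable_indicator_iff measurableSet_closedBall]
    exact integrableOn_const measure_closedBall_lt_top.ne
  refine hg.mono' hf.aestronglyMeasurable (ae_of_all _ fun x => ?_)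
  by_cases hx : x ∈ Metric.closedBall (0 : EuclideanSpace ℝ (Fin n)) R
  · rw [Set.indicator_of_mem hx]; exact hbdd x hx
  · rw [Set.indicator_of_notMem hx, hsupp x hx]; simp

lemma moments_aux {n N : ℕ} {a : EuclideanSpace ℝ (Fin n) → ℂ}
    (ham : Measurable a) {R M : ℝ} (hR : 0 ≤ R)
    (hsupp : ∀ x, x ∉ Metric.closedBall 0 R → a x = 0)
    (hbdd : ∀ x, ‖a x‖ ≤ M)
    (hmom : ∀ α : Fin n → ℕ, (∑ i, α i) ≤ N →
      ∫ x : EuclideanSpace ℝ (Fin n), (∏ i, (x i : ℂ) ^ (α i)) * a x = 0)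
    (m : ℕ) (hm : m ≤ N) (ξ : EuclideanSpace ℝ (Fin n)) :
    ∫ x : EuclideanSpace ℝ (Fin n), ((⟪x, ξ⟫ : ℝ) : ℂ) ^ m * a x = 0 := by
  have hint : ∀ k : Fin n → ℕ,
      Integrable (fun x : EuclideanSpace ℝ (Fin n) => (∏ i, (x i : ℂ) ^ (k i)) * a x) := by
    intro k
    have hmeas : Measurable fun x : EuclideanSpace ℝ (Fin n) => (∏ i, (x i : ℂ) ^ (k i)) * a x := by
      refine Measurable.mul ?_ ham
      refine Finset.measurable_prod _ fun i _ => ?_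
      exact ((Complex.continuous_ofReal.comp (EuclideanSpace.proj i).continuous).pow _).measurable
    refine integrable_aux (M := M * ∏ i, R ^ (k i)) hmeas (fun x hx => by rw [hsupp x hx, mul_zero]) ?_
    intro x hx
    rw [norm_mul]
    rw [mul_comm M]
    refine mul_le_mul ?_ (hbdd x) (norm_nonneg _) (by positivity)
    rw [norm_prod]
    calc ∏ i, ‖(x i : ℂ) ^ (k i)‖ ≤ ∏ i, R ^ (k i) := by
          refine Finset.prod_le_prod (fun i _ => norm_nonneg _) fun i _ => ?_
          rw [norm_pow, Complex.norm_real, Real.norm_eq_abs]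
          refine pow_le_pow_left₀ (abs_nonneg _) ?_ _
          exact le_trans (coord_le_norm x i) (by simpa using hx)
      _ = ∏ i, R ^ (k i) := rfl
  have heq : ∀ x : EuclideanSpace ℝ (Fin n),
      ((⟪x, ξ⟫ : ℝ) : ℂ) ^ m * a x =
      ∑ k ∈ Finset.piAntidiag Finset.univ m,
        ((Nat.multinomial Finset.univ k : ℂ) * ∏ i, (ξ i : ℂ) ^ (k i)) *
          ((∏ i, (x i : ℂ) ^ (k i)) * a x) := by
    intro x
    have h1 : (⟪x, ξ⟫ : ℝ) = ∑ i, x i * ξ i := by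
      simp [PiLp.inner_apply, RCLike.inner_apply, conj_trivial, mul_comm]
    rw [h1]
    push_cast
    rw [Finset.sum_pow_eq_sum_piAntidiag, Finset.sum_mul]
    refine Finset.sum_congr rfl fun k _ => ?_
    simp only [mul_pow, Finset.prod_mul_distrib]
    ring
  calc ∫ x : EuclideanSpace ℝ (Fin n), ((⟪x, ξ⟫ : ℝ) : ℂ) ^ m * a x
      = ∫ x : EuclideanSpace ℝ (Fin n), ∑ k ∈ Finset.piAntidiag Finset.univ m,
          ((Nat.multinomial Finset.univ k : ℂ) * ∏ i, (ξ i : ℂ) ^ (k i)) *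
          ((∏ i, (x i : ℂ) ^ (k i)) * a x) := by
        exact integral_congr_ae (ae_of_all _ heq)
    _ = ∑ k ∈ Finset.piAntidiag Finset.univ m,
          ((Nat.multinomial Finset.univ k : ℂ) * ∏ i, (ξ i : ℂ) ^ (k i)) *
          ∫ x : EuclideanSpace ℝ (Fin n), (∏ i, (x i : ℂ) ^ (k i)) * a x := by
        rw [integral_finset_sum _ fun k _ => (hint k).const_mul _]
        exact Finset.sum_congr rfl fun k _ => integral_const_mul _ _
    _ = 0 := by
        refine Finset.sum_eq_zero fun k hk => ?_
        rw [Finset.mem_piAntidiag] at hk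
        rw [hmom k (hk.1.le.trans hm), mul_zero]

theorem stmt17 (n N : ℕ) (a : EuclideanSpace ℝ (Fin n) → ℂ)
    (ham : Measurable a) (hab : ∃ C : ℝ, ∀ x, ‖a x‖ ≤ C)
    (hac : HasCompactSupport a)
    (hmom : ∀ α : Fin n → ℕ, (∑ i, α i) ≤ N →
      ∫ x : EuclideanSpace ℝ (Fin n), (∏ i, (x i : ℂ) ^ (α i)) * a x = 0) :
    ∃ C : ℝ, ∀ ξ : EuclideanSpace ℝ (Fin n),
      ‖FourierTransform.fourier a ξ‖ ≤ C * min 1 (‖ξ‖ ^ (N + 1)) := by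
  obtain ⟨M₀, hM₀⟩ := hab
  set M : ℝ := max M₀ 0 with hMdef
  have hM : ∀ x, ‖a x‖ ≤ M := fun x => (hM₀ x).trans (le_max_left _ _)
  have hM0 : (0:ℝ) ≤ M := le_max_right _ _
  obtain ⟨R₀, hR₀⟩ := hac.isBounded.subset_closedBall 0
  set R : ℝ := max R₀ 1 with hRdef
  have hR1 : (1:ℝ) ≤ R := le_max_right _ _
  have hR0 : (0:ℝ) ≤ R := zero_le_one.trans hR1
  have hsupp : ∀ x, x ∉ Metric.closedBall (0 : EuclideanSpace ℝ (Fin n)) R → a x = 0 := by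
    intro x hx
    by_contra h
    exact hx (Metric.closedBall_subset_closedBall (le_max_left _ _)
      (hR₀ (subset_tsupport a h)))
  have ha_int : Integrable a := integrable_aux ham hsupp (fun x _ => hM x)
  set L : ℝ := ∫ x, ‖a x‖ with hLdef
  have hL0 : 0 ≤ L := integral_nonneg fun x => norm_nonneg _
  have hbound1 : ∀ ξ, ‖FourierTransform.fourier a ξ‖ ≤ L := fun ξ =>
    VectorFourier.norm_fourierIntegral_le_integral_norm _ _ _ _ _
  set c : ℝ := ((N+1:ℕ).succ : ℝ) * (((N+1:ℕ).factorial : ℝ) * ((N+1:ℕ) : ℝ))⁻¹ with hcdef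
  have hc0 : 0 ≤ c := by positivity
  set Vb : ℝ := (volume (Metric.closedBall (0 : EuclideanSpace ℝ (Fin n)) R)).toReal with hVbdef
  have hVb0 : 0 ≤ Vb := ENNReal.toReal_nonneg
  have hπ : (1:ℝ) ≤ 2*π*R := by nlinarith [Real.pi_gt_three]
  have hπ0 : (0:ℝ) < 2*π*R := lt_of_lt_of_le one_pos hπ
  refine ⟨(2*π*R)^(N+1) * (L + c * M * Vb), fun ξ => ?_⟩
  by_cases hcase : 2*π*R*‖ξ‖ ≤ 1
  · -- small ξ : Taylor expansion
    set t : EuclideanSpace ℝ (Fin n) → ℝ := fun x => ⟪x, ξ⟫ with htdef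
    set z : EuclideanSpace ℝ (Fin n) → ℂ := fun x => (↑(-2*π*t x) * Complex.I) with hzdef
    have htmeas : Measurable t := (continuous_id.inner continuous_const).measurable
    have htle : ∀ x ∈ Metric.closedBall (0 : EuclideanSpace ℝ (Fin n)) R, |t x| ≤ R * ‖ξ‖ := by
      intro x hx
      refine (abs_real_inner_le_norm x ξ).trans ?_
      have : ‖x‖ ≤ R := by simpa using hx
      exact mul_le_mul_of_nonneg_right this (norm_nonneg _)
    have hzabs : ∀ x, ‖z x‖ = 2*π*|t x| := by
      intro x
      rw [hzdef]
      simp [Complex.norm_real, abs_mul, abs_of_nonneg Real.pi_pos.le]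
    have hzle : ∀ x ∈ Metric.closedBall (0 : EuclideanSpace ℝ (Fin n)) R,
        ‖z x‖ ≤ 2*π*R*‖ξ‖ := by
      intro x hx
      rw [hzabs]
      have := htle x hx
      nlinarith [Real.pi_pos]
    have hint_pow : ∀ m : ℕ, Integrable (fun x => ((t x : ℝ) : ℂ) ^ m * a x) := by
      intro m
      refine integrable_aux (M := (R*‖ξ‖)^m * M)
        (((Complex.measurable_ofReal.comp htmeas).pow_const m).mul ham)
        (fun x hx => by rw [hsupp x hx, mul_zero]) (fun x hx => ?_)
      rw [norm_mul, norm_pow, Complex.norm_real, Real.norm_eq_abs]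
      exact mul_le_mul (pow_le_pow_left₀ (abs_nonneg _) (htle x hx) m) (hM x)
        (norm_nonneg _) (by positivity)
    have hint_exp : Integrable (fun x => Complex.exp (z x) * a x) := by
      refine integrable_aux (M := M)
        ((Complex.measurable_exp.comp
          ((Complex.measurable_ofReal.comp ((measurable_const.mul htmeas))).mul
            measurable_const)).mul ham)
        (fun x hx => by rw [hsupp x hx, mul_zero]) (fun x _ => ?_)
      rw [norm_mul]
      have : ‖Complex.exp (z x)‖ = 1 := by
        rw [hzdef]
        simp [Complex.norm_exp]
      rw [this, one_mul]; exact hM x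
    have hint_S : Integrable (fun x =>
        (∑ m ∈ Finset.range (N+1), z x ^ m / (m.factorial : ℂ)) * a x) := by
      have : (fun x => (∑ m ∈ Finset.range (N+1), z x ^ m / (m.factorial : ℂ)) * a x)
          = fun x => ∑ m ∈ Finset.range (N+1),
            (((-2*π:ℂ)*Complex.I)^m / (m.factorial:ℂ)) * (((t x : ℝ) : ℂ)^m * a x) := by
        funext x
        rw [Finset.sum_mul]
        refine Finset.sum_congr rfl fun m _ => ?_
        rw [hzdef]
        push_cast
        ring
      rw [this]
      exact integrable_finset_sum _ fun m _ => (hint_pow m).const_mul _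
    have hS0 : ∫ x, (∑ m ∈ Finset.range (N+1), z x ^ m / (m.factorial : ℂ)) * a x = 0 := by
      have heq : ∀ x, (∑ m ∈ Finset.range (N+1), z x ^ m / (m.factorial : ℂ)) * a x
          = ∑ m ∈ Finset.range (N+1),
            (((-2*π:ℂ)*Complex.I)^m / (m.factorial:ℂ)) * (((t x : ℝ) : ℂ)^m * a x) := by
        intro x
        rw [Finset.sum_mul]
        refine Finset.sum_congr rfl fun m _ => ?_
        rw [hzdef]
        push_cast
        ring
      rw [integral_congr_ae (ae_of_all _ heq),
        integral_finset_sum _ fun m _ => (hint_pow m).const_mul _]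
      refine Finset.sum_eq_zero fun m hm => ?_
      rw [integral_const_mul, moments_aux ham hR0 hsupp hM hmom m
        (Nat.lt_succ_iff.mp (Finset.mem_range.mp hm)) ξ, mul_zero]
    have hFT : FourierTransform.fourier a ξ
        = ∫ x, (Complex.exp (z x)
            - ∑ m ∈ Finset.range (N+1), z x ^ m / (m.factorial : ℂ)) * a x := by
      rw [Real.fourier_eq']
      simp_rw [smul_eq_mul]
      rw [show (∫ x, Complex.exp (↑(-2 * π * ⟪x, ξ⟫) * Complex.I) * a x)
          = ∫ x, Complex.exp (z x) * a x from rfl,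
        ← sub_zero (∫ x, Complex.exp (z x) * a x), ← hS0, ← integral_sub hint_exp hint_S]
      congr 1
      funext x
      ring
    set D : ℝ := (2*π*R*‖ξ‖)^(N+1) * c * M with hDdef
    have hD0 : 0 ≤ D := by positivity
    have hgle : ∀ x, ‖(Complex.exp (z x)
        - ∑ m ∈ Finset.range (N+1), z x ^ m / (m.factorial : ℂ)) * a x‖
        ≤ (Metric.closedBall (0 : EuclideanSpace ℝ (Fin n)) R).indicator (fun _ => D) x := by
      intro x
      by_cases hx : x ∈ Metric.closedBall (0 : EuclideanSpace ℝ (Fin n)) R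
      · rw [Set.indicator_of_mem hx, norm_mul]
        have h1 : ‖z x‖ ≤ 1 := (hzle x hx).trans hcase
        have hb := Complex.exp_bound h1 (n := N+1) (Nat.succ_pos N)
        have hzpow : ‖z x‖ ^ (N+1) ≤ (2*π*R*‖ξ‖)^(N+1) :=
          pow_le_pow_left₀ (norm_nonneg _) (hzle x hx) _
        have h2 : ‖Complex.exp (z x)
            - ∑ m ∈ Finset.range (N+1), z x ^ m / (m.factorial : ℂ)‖
            ≤ (2*π*R*‖ξ‖)^(N+1) * c := by
          refine le_trans hb ?_
          exact mul_le_mul_of_nonneg_right hzpow hc0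
        rw [hDdef]
        exact mul_le_mul h2 (hM x) (norm_nonneg _) (by positivity)
      · rw [Set.indicator_of_notMem hx, hsupp x hx, mul_zero, norm_zero]
    have hgint : Integrable ((Metric.closedBall (0 : EuclideanSpace ℝ (Fin n)) R).indicator
        (fun _ => D)) := by
      rw [integrable_indicator_iff measurableSet_closedBall]
      exact integrableOn_const measure_closedBall_lt_top.ne
    have hmain : ‖FourierTransform.fourier a ξ‖ ≤ D * Vb := by
      rw [hFT]
      refine le_trans (norm_integral_le_of_norm_le hgint (ae_of_all _ hgle)) ?_
      rw [integral_indicator_const _ measurableSet_closedBall, smul_eq_mul, mul_comm]; exact le_rfl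
    have hξ1 : ‖ξ‖ ^ (N+1) ≤ 1 := by
      refine pow_le_one₀ (norm_nonneg _) ?_
      nlinarith [Real.pi_pos, norm_nonneg ξ]
    rw [min_eq_right hξ1]
    calc ‖FourierTransform.fourier a ξ‖ ≤ D * Vb := hmain
      _ = (2*π*R)^(N+1) * (c * M * Vb) * ‖ξ‖^(N+1) := by
          rw [hDdef, mul_pow]; ring
      _ ≤ (2*π*R)^(N+1) * (L + c * M * Vb) * ‖ξ‖^(N+1) := by
          have h1 : c * M * Vb ≤ L + c * M * Vb := by linarith
          have h2 : (0:ℝ) ≤ (2*π*R)^(N+1) := by positivity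
          exact mul_le_mul_of_nonneg_right
            (mul_le_mul_of_nonneg_left h1 h2) (by positivity)
  · -- large ξ : trivial bound
    push_neg at hcase
    have hξlb : (2*π*R)⁻¹ ≤ ‖ξ‖ := by
      rw [inv_le_iff_one_le_mul₀ hπ0]
      nlinarith
    have hmin : ((2*π*R)^(N+1))⁻¹ ≤ min 1 (‖ξ‖^(N+1)) := by
      refine le_min ?_ ?_
      · exact inv_le_one_of_one_le₀ (one_le_pow₀ hπ)
      · rw [← inv_pow]
        exact pow_le_pow_left₀ (by positivity) hξlb _
    calc ‖FourierTransform.fourier a ξ‖ ≤ L := hbound1 ξ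
      _ = (2*π*R)^(N+1) * L * ((2*π*R)^(N+1))⁻¹ := by
          field_simp
      _ ≤ (2*π*R)^(N+1) * (L + c * M * Vb) * min 1 (‖ξ‖^(N+1)) := by
          refine mul_le_mul ?_ hmin (by positivity) (by positivity)
          have : L ≤ L + c * M * Vb := le_add_of_nonneg_right (by positivity)
          exact mul_le_mul_of_nonneg_left this (by positivity)
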